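/- Let δ ∈ ℝ with 1 < δ < 2. Then there exists a constant C, depending only on δ and independent of j, such that for every integer j ≥ 2, Σ_{k=1}^{j−1} [ (j−k)^{2−δ} − (j−k−1)^{2−δ} ] · k^{δ−3} ≤ C j^{1−δ}. -/

import Mathlib

/-- Bernoulli-style increment bound: for `b ≥ 1` and `0 ≤ α ≤ 1`,
`(b+1)^α - b^α ≤ α * b^(α-1)`. -/
lemma bern_inc {b α : ℝ} (hb : 1 ≤ b) (hα0 : 0 ≤ α) (hα1 : α ≤ 1) :
    (b + 1) ^ α - b ^ α ≤ α * b ^ (α - 1) := by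
  have hb0 : (0:ℝ) < b := by linarith
  have hinv : (0:ℝ) < 1 / b := by positivity
  have h1 : b + 1 = b * (1 + 1 / b) := by field_simp
  have h2 : (b * (1 + 1 / b)) ^ α = b ^ α * (1 + 1 / b) ^ α :=
    Real.mul_rpow hb0.le (by positivity)
  have h3 : (1 + 1 / b) ^ α ≤ 1 + α * (1 / b) :=
    rpow_one_add_le_one_add_mul_self (by linarith) hα0 hα1
  have hba : (0:ℝ) ≤ b ^ α := Real.rpow_nonneg hb0.le α
  have h4 : b ^ (α - 1) = b ^ α / b := by
    rw [Real.rpow_sub hb0, Real.rpow_one]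
  calc (b + 1) ^ α - b ^ α = b ^ α * (1 + 1 / b) ^ α - b ^ α := by rw [h1, h2]
    _ ≤ b ^ α * (1 + α * (1 / b)) - b ^ α := by nlinarith
    _ = α * (b ^ α / b) := by ring
    _ = α * b ^ (α - 1) := by rw [h4]

/-- Telescoping sum. -/
lemma tele_sum (g : ℕ → ℝ) (m n : ℕ) (hmn : m ≤ n) :
    ∑ k ∈ Finset.Icc (m + 1) n, (g (n + 1 - k) - g (n - k)) = g (n - m) - g 0 := by
  rw [← Finset.sum_range_sub g (n - m)]
  refine Finset.sum_nbij' (fun k => n - k) (fun i => n - i) ?_ ?_ ?_ ?_ ?_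
  · intro a ha
    simp only [Finset.mem_Icc] at ha
    simp only [Finset.mem_range]
    omega
  · intro a ha
    simp only [Finset.mem_range] at ha
    simp only [Finset.mem_Icc]
    omega
  · intro a ha
    simp only [Finset.mem_Icc] at ha
    show n - (n - a) = a
    omega
  · intro a ha
    simp only [Finset.mem_range] at ha
    show n - (n - a) = a
    omega
  · intro a ha
    simp only [Finset.mem_Icc] at ha
    have e1 : n + 1 - a = (n - a) + 1 := by omega
    rw [e1]

theorem stmt16 (δ : ℝ) (hδ1 : 1 < δ) (hδ2 : δ < 2) :
    ∃ C : ℝ, ∀ j : ℕ, 2 ≤ j →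
      ∑ k ∈ Finset.Icc 1 (j - 1),
          (((j:ℝ) - (k:ℕ)) ^ (2 - δ) - ((j:ℝ) - (k:ℕ) - 1) ^ (2 - δ)) * ((k:ℕ):ℝ) ^ (δ - 3)
        ≤ C * (j:ℝ) ^ (1 - δ) := by
  have hα0 : (0:ℝ) < 2 - δ := by linarith
  have hα1 : 2 - δ ≤ 1 := by linarith
  have hsum : Summable (fun n : ℕ => (n:ℝ) ^ (δ - 3)) :=
    Real.summable_nat_rpow.mpr (by linarith)
  set S := ∑' n : ℕ, (n:ℝ) ^ (δ - 3) with hS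
  have hS0 : 0 ≤ S := tsum_nonneg fun n => Real.rpow_nonneg (Nat.cast_nonneg n) _
  have h4pos : (0:ℝ) < (4:ℝ) ^ (δ - 1) := Real.rpow_pos_of_pos (by norm_num) _
  have h2pos : (0:ℝ) < (2:ℝ) ^ (3 - δ) := Real.rpow_pos_of_pos (by norm_num) _
  refine ⟨(2 - δ) * 4 ^ (δ - 1) * S + 2 ^ (3 - δ), fun j hj => ?_⟩
  have hj2 : (2:ℝ) ≤ (j:ℝ) := by exact_mod_cast hj
  have hj0 : (0:ℝ) < (j:ℝ) := by linarith
  have hjpow : (0:ℝ) ≤ (j:ℝ) ^ (1 - δ) := Real.rpow_nonneg hj0.le _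
  set m := (j - 1) / 2 with hm
  have hm1 : m ≤ j - 1 := Nat.div_le_self _ _
  set f : ℕ → ℝ := fun k =>
    (((j:ℝ) - (k:ℕ)) ^ (2 - δ) - ((j:ℝ) - (k:ℕ) - 1) ^ (2 - δ)) * ((k:ℕ):ℝ) ^ (δ - 3) with hf
  -- Part A : sum over Ioc 0 m
  have hA : ∑ k ∈ Finset.Ioc 0 m, f k ≤ (2 - δ) * 4 ^ (δ - 1) * S * (j:ℝ) ^ (1 - δ) := by
    have step : ∀ k ∈ Finset.Ioc 0 m,
        f k ≤ ((2 - δ) * 4 ^ (δ - 1) * (j:ℝ) ^ (1 - δ)) * (k:ℝ) ^ (δ - 3) := by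
      intro k hk
      simp only [Finset.mem_Ioc] at hk
      obtain ⟨hk0, hkm⟩ := hk
      have hk2 : k + 2 ≤ j := by omega
      have h2k : 2 * k + 1 ≤ j := by omega
      have hk2' : (k:ℝ) + 2 ≤ (j:ℝ) := by exact_mod_cast hk2
      have h2k' : 2 * (k:ℝ) + 1 ≤ (j:ℝ) := by exact_mod_cast h2k
      have hb : (1:ℝ) ≤ (j:ℝ) - k - 1 := by linarith
      have hbj : (j:ℝ) / 4 ≤ (j:ℝ) - k - 1 := by linarith
      have hinc : ((j:ℝ) - k) ^ (2 - δ) - ((j:ℝ) - k - 1) ^ (2 - δ)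
          ≤ (2 - δ) * ((j:ℝ) - k - 1) ^ (1 - δ) := by
        have h := bern_inc hb hα0.le hα1
        have e : (j:ℝ) - k - 1 + 1 = (j:ℝ) - k := by ring
        have e2 : (2 - δ) - 1 = 1 - δ := by ring
        rw [e, e2] at h
        exact h
      have h5 : ((j:ℝ) - k - 1) ^ (1 - δ) ≤ ((j:ℝ) / 4) ^ (1 - δ) :=
        Real.rpow_le_rpow_of_nonpos (by positivity) hbj (by linarith)
      have h6 : ((j:ℝ) / 4) ^ (1 - δ) = 4 ^ (δ - 1) * (j:ℝ) ^ (1 - δ) := by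
        rw [Real.div_rpow hj0.le (by norm_num)]
        rw [show (δ - 1) = -(1 - δ) by ring, Real.rpow_neg (by norm_num : (0:ℝ) ≤ 4)]
        field_simp
      have hknn : (0:ℝ) ≤ (k:ℝ) ^ (δ - 3) := Real.rpow_nonneg (Nat.cast_nonneg k) _
      have : ((j:ℝ) - k) ^ (2 - δ) - ((j:ℝ) - k - 1) ^ (2 - δ)
          ≤ (2 - δ) * 4 ^ (δ - 1) * (j:ℝ) ^ (1 - δ) := by
        calc ((j:ℝ) - k) ^ (2 - δ) - ((j:ℝ) - k - 1) ^ (2 - δ)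
            ≤ (2 - δ) * ((j:ℝ) - k - 1) ^ (1 - δ) := hinc
          _ ≤ (2 - δ) * (((j:ℝ) / 4) ^ (1 - δ)) := by nlinarith
          _ = (2 - δ) * 4 ^ (δ - 1) * (j:ℝ) ^ (1 - δ) := by rw [h6]; ring
      calc f k = (((j:ℝ) - k) ^ (2 - δ) - ((j:ℝ) - k - 1) ^ (2 - δ)) * (k:ℝ) ^ (δ - 3) := rfl
        _ ≤ ((2 - δ) * 4 ^ (δ - 1) * (j:ℝ) ^ (1 - δ)) * (k:ℝ) ^ (δ - 3) :=
            mul_le_mul_of_nonneg_right this hknn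
    calc ∑ k ∈ Finset.Ioc 0 m, f k
        ≤ ∑ k ∈ Finset.Ioc 0 m, ((2 - δ) * 4 ^ (δ - 1) * (j:ℝ) ^ (1 - δ)) * (k:ℝ) ^ (δ - 3) :=
          Finset.sum_le_sum step
      _ = ((2 - δ) * 4 ^ (δ - 1) * (j:ℝ) ^ (1 - δ)) * ∑ k ∈ Finset.Ioc 0 m, (k:ℝ) ^ (δ - 3) := by
          rw [Finset.mul_sum]
      _ ≤ ((2 - δ) * 4 ^ (δ - 1) * (j:ℝ) ^ (1 - δ)) * S := by
          refine mul_le_mul_of_nonneg_left ?_ (by positivity)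
          exact Summable.sum_le_tsum _ (fun i _ => Real.rpow_nonneg (Nat.cast_nonneg i) _) hsum
      _ = (2 - δ) * 4 ^ (δ - 1) * S * (j:ℝ) ^ (1 - δ) := by ring
  -- Part B : sum over Ioc m (j-1)
  have hB : ∑ k ∈ Finset.Ioc m (j - 1), f k ≤ 2 ^ (3 - δ) * (j:ℝ) ^ (1 - δ) := by
    have hjh : (0:ℝ) < (j:ℝ) / 2 := by linarith
    have hjd : (0:ℝ) ≤ ((j:ℝ) / 2) ^ (δ - 3) := Real.rpow_nonneg hjh.le _
    have step : ∀ k ∈ Finset.Ioc m (j - 1),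
        f k ≤ (((j:ℝ) - k) ^ (2 - δ) - ((j:ℝ) - k - 1) ^ (2 - δ)) * ((j:ℝ) / 2) ^ (δ - 3) := by
      intro k hk
      simp only [Finset.mem_Ioc] at hk
      obtain ⟨hmk, hkj⟩ := hk
      have hkj' : (k:ℝ) ≤ (j:ℝ) - 1 := by
        have : (k:ℝ) ≤ ((j - 1 : ℕ):ℝ) := by exact_mod_cast hkj
        have hcast : ((j - 1 : ℕ):ℝ) = (j:ℝ) - 1 := by
          have : 1 ≤ j := by omega
          push_cast [this]; ring
        linarith [hcast ▸ this]
      have hjk : j ≤ 2 * k := by omega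
      have hjk' : (j:ℝ) ≤ 2 * (k:ℝ) := by exact_mod_cast hjk
      have hincnn : 0 ≤ ((j:ℝ) - k) ^ (2 - δ) - ((j:ℝ) - k - 1) ^ (2 - δ) := by
        have : ((j:ℝ) - k - 1) ^ (2 - δ) ≤ ((j:ℝ) - k) ^ (2 - δ) :=
          Real.rpow_le_rpow (by linarith) (by linarith) hα0.le
        linarith
      have hkd : (k:ℝ) ^ (δ - 3) ≤ ((j:ℝ) / 2) ^ (δ - 3) :=
        Real.rpow_le_rpow_of_nonpos hjh (by linarith) (by linarith)
      exact mul_le_mul_of_nonneg_left hkd hincnn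
    have htele : ∑ k ∈ Finset.Ioc m (j - 1),
        (((j:ℝ) - k) ^ (2 - δ) - ((j:ℝ) - k - 1) ^ (2 - δ))
        = ((j - 1 - m : ℕ):ℝ) ^ (2 - δ) := by
      have hrw : ∀ k ∈ Finset.Ioc m (j - 1),
          (((j:ℝ) - k) ^ (2 - δ) - ((j:ℝ) - k - 1) ^ (2 - δ))
          = (((j - 1 + 1 - k : ℕ):ℝ) ^ (2 - δ) - ((j - 1 - k : ℕ):ℝ) ^ (2 - δ)) := by
        intro k hk
        simp only [Finset.mem_Ioc] at hk
        have h1 : ((j - 1 + 1 - k : ℕ):ℝ) = (j:ℝ) - k := by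
          have : j - 1 + 1 - k + k = j := by omega
          have := congrArg (fun n : ℕ => (n:ℝ)) this
          push_cast at this
          linarith
        have h2 : ((j - 1 - k : ℕ):ℝ) = (j:ℝ) - k - 1 := by
          have : j - 1 - k + k + 1 = j := by omega
          have := congrArg (fun n : ℕ => (n:ℝ)) this
          push_cast at this
          linarith
        rw [h1, h2]
      rw [Finset.sum_congr rfl hrw, ← Finset.Icc_add_one_left_eq_Ioc,
        tele_sum (fun i => ((i:ℕ):ℝ) ^ (2 - δ)) m (j - 1) hm1]
      simp [Real.zero_rpow (ne_of_gt hα0)]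
    have htb : ((j - 1 - m : ℕ):ℝ) ^ (2 - δ) ≤ (j:ℝ) ^ (2 - δ) := by
      apply Real.rpow_le_rpow (Nat.cast_nonneg _) _ hα0.le
      exact_mod_cast Nat.le_of_lt_succ (by omega : j - 1 - m < j + 1)
    have hhalf : ((j:ℝ) / 2) ^ (δ - 3) = (j:ℝ) ^ (δ - 3) * 2 ^ (3 - δ) := by
      rw [Real.div_rpow hj0.le (by norm_num)]
      rw [show (3 - δ) = -(δ - 3) by ring, Real.rpow_neg (by norm_num : (0:ℝ) ≤ 2)]
      field_simp
    have hjj : (j:ℝ) ^ (2 - δ) * (j:ℝ) ^ (δ - 3) = (j:ℝ) ^ (-1 : ℝ) := by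
      rw [← Real.rpow_add hj0]; norm_num
    have hjle : (j:ℝ) ^ (-1 : ℝ) ≤ (j:ℝ) ^ (1 - δ) :=
      Real.rpow_le_rpow_of_exponent_le (by linarith) (by linarith)
    calc ∑ k ∈ Finset.Ioc m (j - 1), f k
        ≤ ∑ k ∈ Finset.Ioc m (j - 1),
            (((j:ℝ) - k) ^ (2 - δ) - ((j:ℝ) - k - 1) ^ (2 - δ)) * ((j:ℝ) / 2) ^ (δ - 3) :=
          Finset.sum_le_sum step
      _ = (∑ k ∈ Finset.Ioc m (j - 1),
            (((j:ℝ) - k) ^ (2 - δ) - ((j:ℝ) - k - 1) ^ (2 - δ))) * ((j:ℝ) / 2) ^ (δ - 3) := by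
          rw [Finset.sum_mul]
      _ = ((j - 1 - m : ℕ):ℝ) ^ (2 - δ) * ((j:ℝ) / 2) ^ (δ - 3) := by rw [htele]
      _ ≤ (j:ℝ) ^ (2 - δ) * ((j:ℝ) / 2) ^ (δ - 3) := mul_le_mul_of_nonneg_right htb hjd
      _ = (j:ℝ) ^ (-1 : ℝ) * 2 ^ (3 - δ) := by rw [hhalf, ← mul_assoc, hjj]
      _ ≤ (j:ℝ) ^ (1 - δ) * 2 ^ (3 - δ) := mul_le_mul_of_nonneg_right hjle h2pos.le
      _ = 2 ^ (3 - δ) * (j:ℝ) ^ (1 - δ) := by ring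
  calc ∑ k ∈ Finset.Icc 1 (j - 1), f k
      = (∑ k ∈ Finset.Ioc 0 m, f k) + ∑ k ∈ Finset.Ioc m (j - 1), f k := by
        rw [Finset.sum_Ioc_consecutive f (Nat.zero_le m) hm1, ← Finset.Icc_add_one_left_eq_Ioc]
        rfl
    _ ≤ (2 - δ) * 4 ^ (δ - 1) * S * (j:ℝ) ^ (1 - δ) + 2 ^ (3 - δ) * (j:ℝ) ^ (1 - δ) :=
        add_le_add hA hB
    _ = ((2 - δ) * 4 ^ (δ - 1) * S + 2 ^ (3 - δ)) * (j:ℝ) ^ (1 - δ) := by ring
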